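/- Let M be a definably complete locally o-minimal structure and N an elementary extension. If a ∈ M and b ∈ N satisfy a < b and b < t for every t ∈ M with t > a, then b does not lie in the discrete closure of M computed in N; that is, b belongs to no N-definable-with-parameters-from-M discrete closed subset of N. -/

import Mathlib

open FirstOrder Set

namespace Paper

variable (L : FirstOrder.Language)

/-- A subset of `Mⁿ` definable with arbitrary parameters from `M`. -/
def Def (M : Type*) [L.Structure M] {n : ℕ} (s : Set (Fin n → M)) : Prop :=
  Set.Definable (Set.univ : Set M) L s

/-- A subset of `M` definable with arbitrary parameters from `M`. -/
def Def1 (M : Type*) [L.Structure M] (s : Set M) : Prop :=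
  Def L M {f : Fin 1 → M | f 0 ∈ s}

/-- A subset of `M × M` definable with arbitrary parameters from `M`. -/
def Def2 (M : Type*) [L.Structure M] (s : Set (M × M)) : Prop :=
  Def L M {f : Fin 2 → M | (f 0, f 1) ∈ s}

/-- A discrete subset of a topological space. -/
def IsDiscrete {X : Type*} [TopologicalSpace X] (s : Set X) : Prop :=
  ∀ x ∈ s, ∃ U : Set X, IsOpen U ∧ x ∈ U ∧ U ∩ s = {x}

/-- An open interval (with possibly infinite endpoints). -/
def IsOInterval {M : Type*} [Preorder M] (s : Set M) : Prop :=
  (∃ a b : M, s = Set.Ioo a b) ∨ (∃ a, s = Set.Ioi a) ∨ (∃ b, s = Set.Iio b) ∨ s = Set.univ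

/-- A finite union of points and open intervals. -/
def FinUnionPtsIntervals {M : Type*} [Preorder M] (s : Set M) : Prop :=
  ∃ (F : Finset M) (n : ℕ) (J : Fin n → Set M),
    (∀ i, IsOInterval (J i)) ∧ s = ↑F ∪ ⋃ i, J i

/-- Local o-minimality. -/
def LocallyOMinimal (M : Type*) [L.Structure M] [LinearOrder M] : Prop :=
  ∀ s : Set M, Def1 L M s → ∀ a : M,
    ∃ I : Set M, IsOInterval I ∧ a ∈ I ∧ FinUnionPtsIntervals (s ∩ I)

/-- Definable completeness. -/
def DefinablyComplete (M : Type*) [L.Structure M] [LinearOrder M] : Prop :=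
  ∀ s : Set M, Def1 L M s → s.Nonempty →
    (BddAbove s → ∃ a, IsLUB s a) ∧ (BddBelow s → ∃ a, IsGLB s a)

/-- A coordinate projection of `X ⊆ Mⁿ` to `M^d` has image with nonempty interior. -/
def HasDimWit {M : Type*} [TopologicalSpace M] {n : ℕ} (X : Set (Fin n → M)) (d : ℕ) : Prop :=
  ∃ σ : Fin d ↪ Fin n, (interior ((fun x => x ∘ σ) '' X)).Nonempty

/-- The projection dimension of a subset of `Mⁿ`, with `projDim ∅ = ⊥ = -∞`. -/
noncomputable def projDim {M : Type*} [TopologicalSpace M] {n : ℕ}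
    (X : Set (Fin n → M)) : WithBot ℕ∞ :=
  ⨆ d ∈ {d : ℕ | HasDimWit X d}, ((d : ℕ∞) : WithBot ℕ∞)

/-- The discrete closure of `A ⊆ M`. -/
def discl (M : Type*) [L.Structure M] [TopologicalSpace M] (A : Set M) : Set M :=
  {x | ∃ s : Set M, Set.Definable A L {f : Fin 1 → M | f 0 ∈ s} ∧
    IsDiscrete s ∧ IsClosed s ∧ x ∈ s}


end Paper

open FirstOrder.Language

namespace Helper


variable {L : FirstOrder.Language}

lemma transfer_all {M N : Type*} [L.Structure M] [L.Structure N]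
    (ι : M ↪ₑ[L] N) {κ : Type*} {n : ℕ} (ψ : L.Formula (κ ⊕ Fin n)) (v : κ → M)
    (h : ∀ x : Fin n → M, ψ.Realize (Sum.elim v x)) (y : Fin n → N) :
    ψ.Realize (Sum.elim (⇑ι ∘ v) y) := by
  have hM : (ψ.iAlls (Fin n)).Realize v := by
    rw [Formula.realize_iAlls]
    intro x
    exact h x
  have hN := (ι.map_formula (ψ.iAlls (Fin n)) v).2 hM
  rw [Formula.realize_iAlls] at hN
  exact hN y

/-- `u < y → y < w → ψ y`, with `u, w` as the two extra free variables. -/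
noncomputable def guardedF [L.IsOrdered] {κ : Type*} (ψ : L.Formula (κ ⊕ Fin 1)) :
    L.Formula ((κ ⊕ Fin 2) ⊕ Fin 1) :=
  (Term.lt (Term.var (Sum.inl (Sum.inl (Sum.inr 0)))) (Term.var (Sum.inl (Sum.inr 0)))).imp
    ((Term.lt (Term.var (Sum.inl (Sum.inr 0))) (Term.var (Sum.inl (Sum.inl (Sum.inr 1))))).imp
      (ψ.relabel (Sum.map Sum.inl id)))

lemma realize_guardedF [L.IsOrdered] {P : Type*} [L.Structure P] [Preorder P]
    [L.OrderedStructure P] {κ : Type*} (ψ : L.Formula (κ ⊕ Fin 1))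
    (V : κ ⊕ Fin 2 → P) (x : Fin 1 → P) :
    (guardedF ψ).Realize (Sum.elim V x) ↔
      (V (Sum.inr 0) < x 0 → x 0 < V (Sum.inr 1) → ψ.Realize (Sum.elim (V ∘ Sum.inl) x)) := by
  have hre : (Sum.elim V x ∘ Sum.map Sum.inl id) = Sum.elim (V ∘ Sum.inl) x := by
    funext p; rcases p with p | i <;> rfl
  have key : BoundedFormula.Realize (Formula.relabel (Sum.map Sum.inl id) ψ) (Sum.elim V x)
      default ↔ BoundedFormula.Realize ψ (Sum.elim (V ∘ Sum.inl) x) default := by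
    rw [← hre]; exact Formula.realize_relabel
  simp [guardedF, Formula.Realize, Term.realize_lt, BoundedFormula.realize_imp, key]


lemma map_lt_iff [L.IsOrdered] {M N : Type*}
    [Preorder M] [L.Structure M] [L.OrderedStructure M]
    [Preorder N] [L.Structure N] [L.OrderedStructure N]
    (ι : M ↪ₑ[L] N) (x y : M) : ι x < ι y ↔ x < y := by
  have h := ι.map_formula
    (Term.lt (Term.var (Sum.inl 0)) (Term.var (Sum.inl 1)) : L.Formula (Fin 2)) ![x, y]
  have hc : ⇑ι ∘ ![x, y] = ![ι x, ι y] := by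
    funext i; fin_cases i <;> rfl
  rw [hc] at h
  simpa [Formula.Realize, Term.realize_lt] using h

lemma transfer_interval [L.IsOrdered] {M N : Type*}
    [Preorder M] [L.Structure M] [L.OrderedStructure M]
    [Preorder N] [L.Structure N] [L.OrderedStructure N]
    (ι : M ↪ₑ[L] N) {κ : Type*} (ψ : L.Formula (κ ⊕ Fin 1)) (v : κ → M) (u w : M)
    (h : ∀ x : M, u < x → x < w → ψ.Realize (Sum.elim v (fun _ => x)))
    (y : N) (h1 : ι u < y) (h2 : y < ι w) :
    ψ.Realize (Sum.elim (⇑ι ∘ v) (fun _ => y)) := by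
  have hM : ∀ x : Fin 1 → M, (guardedF ψ).Realize (Sum.elim (Sum.elim v ![u, w]) x) := by
    intro x
    rw [realize_guardedF]
    intro hu hw
    have hx : x = fun _ => x 0 := funext fun i => by rw [Subsingleton.elim i 0]
    have := h (x 0) (by simpa using hu) (by simpa using hw)
    rw [hx]
    convert this using 2
    rfl
  have hN := transfer_all ι (guardedF ψ) (Sum.elim v ![u, w]) hM (fun _ => y)
  have hcomp : ⇑ι ∘ Sum.elim v ![u, w] = Sum.elim (⇑ι ∘ v) ![ι u, ι w] := by
    funext p
    rcases p with p | i
    · rfl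
    · fin_cases i <;> rfl
  rw [hcomp, realize_guardedF] at hN
  have := hN (by simpa using h1) (by simpa using h2)
  convert this using 2
  rfl

lemma denselyOrdered_of_elementary [L.IsOrdered] {M N : Type*}
    [Preorder M] [L.Structure M] [L.OrderedStructure M]
    [Preorder N] [L.Structure N] [L.OrderedStructure N]
    [DenselyOrdered M] (ι : M ↪ₑ[L] N) : DenselyOrdered N := by
  constructor
  intro y1 y2 hlt
  classical
  let inner : L.Formula ((Empty ⊕ Fin 2) ⊕ Fin 1) :=
    (Term.lt (Term.var (Sum.inl (Sum.inl (Sum.inr 0)))) (Term.var (Sum.inl (Sum.inr 0)))) ⊓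
      (Term.lt (Term.var (Sum.inl (Sum.inr 0))) (Term.var (Sum.inl (Sum.inl (Sum.inr 1)))))
  let φd : L.Formula (Empty ⊕ Fin 2) :=
    (Term.lt (Term.var (Sum.inl (Sum.inr 0))) (Term.var (Sum.inl (Sum.inr 1)))).imp
      (inner.iExs (Fin 1))
  have hM : ∀ x : Fin 2 → M, φd.Realize (Sum.elim Empty.elim x) := by
    intro x
    simp only [φd, inner, Formula.Realize, BoundedFormula.realize_imp, Term.realize_lt,
      BoundedFormula.realize_iExs, BoundedFormula.realize_inf]
    intro hxy
    obtain ⟨z, hz1, hz2⟩ := exists_between (show x 0 < x 1 by simpa using hxy)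
    exact ⟨fun _ => z, by simpa using ⟨hz1, hz2⟩⟩
  have hN := transfer_all ι φd Empty.elim hM ![y1, y2]
  have hcomp : Sum.elim (⇑ι ∘ Empty.elim) ![y1, y2] =
      Sum.elim (Empty.elim : Empty → N) ![y1, y2] := by
    funext p; rcases p with p | i
    · exact p.elim
    · rfl
  rw [hcomp] at hN
  simp only [φd, inner, Formula.Realize, BoundedFormula.realize_imp, Term.realize_lt,
    BoundedFormula.realize_iExs, BoundedFormula.realize_inf] at hN
  obtain ⟨i, hi1, hi2⟩ := hN (by simpa using hlt)
  exact ⟨i 0, by simpa using hi1, by simpa using hi2⟩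

end Helper

open Paper

/-- Let `N` be an elementary extension of a definably complete locally o-minimal
structure `M`. If `a ∈ M` and `b ∈ N` satisfy `a < b` and `b < t` for every `t ∈ M` with
`t > a`, then `b` lies in no discrete closed subset of `N` definable with parameters
from `M`; that is, `b ∉ discl_N(M)`. -/
theorem not_mem_discl_of_right_infinitesimal
    {L : FirstOrder.Language} {M : Type*} {N : Type*} [L.IsOrdered]
    [LinearOrder M] [L.Structure M] [L.OrderedStructure M]
    [DenselyOrdered M] [NoMaxOrder M] [NoMinOrder M]
    [TopologicalSpace M] [OrderTopology M]
    [LinearOrder N] [L.Structure N] [L.OrderedStructure N]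
    [TopologicalSpace N] [OrderTopology N]
    (hlo : LocallyOMinimal L M) (hdc : DefinablyComplete L M)
    (ι : M ↪ₑ[L] N) (a : M) (b : N)
    (hab : ι a < b) (hinf : ∀ t : M, a < t → b < ι t) :
    b ∉ discl L N (Set.range ι) := by
  classical
  rintro ⟨s, hsdef, hsdisc, _hscl, hbs⟩
  rw [Set.definable_iff_exists_formula_sum] at hsdef
  obtain ⟨ψ, hψ⟩ := hsdef
  have hmem_s : ∀ y : N, y ∈ s ↔
      ψ.Realize (Sum.elim (Subtype.val : ↥(Set.range ι) → N) (fun _ : Fin 1 => y)) := by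
    intro y
    have := Set.ext_iff.1 hψ (fun _ : Fin 1 => y)
    simpa using this
  have hex : ∀ p : ↥(Set.range ι), ∃ m : M, ι m = (p : N) := fun p => p.2
  let g : ↥(Set.range ι) → M := fun p => (hex p).choose
  have hg : ∀ p, ι (g p) = (p : N) := fun p => (hex p).choose_spec
  have hιg : ⇑ι ∘ g = (Subtype.val : ↥(Set.range ι) → N) := funext fun p => hg p
  let X : Set M := {x | ψ.Realize (Sum.elim g (fun _ : Fin 1 => x))}
  have hX : ∀ x : M, x ∈ X ↔ ι x ∈ s := by
    intro x
    rw [hmem_s]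
    have hc : Sum.elim (Subtype.val : ↥(Set.range ι) → N) (fun _ : Fin 1 => ι x)
        = ⇑ι ∘ Sum.elim g (fun _ : Fin 1 => x) := by
      funext p; rcases p with p | i
      · exact (hg p).symm
      · rfl
    rw [hc, ι.map_formula]
    exact Iff.rfl
  have hXdef : Def1 L M X := by
    show Set.Definable (Set.univ : Set M) L {f : Fin 1 → M | f 0 ∈ X}
    rw [Set.definable_iff_exists_formula_sum]
    refine ⟨ψ.relabel (Sum.map (fun p => (⟨g p, Set.mem_univ _⟩ : ↥(Set.univ : Set M))) id), ?_⟩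
    ext v
    simp only [Set.mem_setOf_eq, Formula.realize_relabel]
    have hc : (Sum.elim (Subtype.val : ↥(Set.univ : Set M) → M) v) ∘
        (Sum.map (fun p => (⟨g p, Set.mem_univ _⟩ : ↥(Set.univ : Set M))) id)
        = Sum.elim g v := by
      funext p; rcases p with p | i <;> rfl
    rw [hc]
    have hv : v = fun _ : Fin 1 => v 0 := funext fun i => by rw [Subsingleton.elim i 0]
    conv_rhs => rw [hv]
    exact Iff.rfl
  obtain ⟨I, hIint, haI, F, n, J, hJint, hdecomp⟩ := hlo X hXdef a
  haveI : DenselyOrdered N := Helper.denselyOrdered_of_elementary ι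
  have hJempty : ∀ i, J i = ∅ := by
    intro i
    by_contra hne
    obtain ⟨x, hx⟩ := Set.nonempty_iff_ne_empty.2 hne
    have hxXI : x ∈ X ∩ I := by
      rw [hdecomp]; exact Set.mem_union_right _ (Set.mem_iUnion.2 ⟨i, hx⟩)
    have hxs : ι x ∈ s := (hX x).1 hxXI.1
    obtain ⟨u, w, hu, hw, hsub⟩ : ∃ u w : M, u < x ∧ x < w ∧ Set.Ioo u w ⊆ J i := by
      rcases hJint i with ⟨p, q, h⟩ | ⟨p, h⟩ | ⟨q, h⟩ | h
      · rw [h] at hx; exact ⟨p, q, hx.1, hx.2, by rw [h]⟩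
      · rw [h] at hx
        obtain ⟨w, hw⟩ := exists_gt x
        exact ⟨p, w, hx, hw, by rw [h]; exact fun z hz => hz.1⟩
      · rw [h] at hx
        obtain ⟨u, hu⟩ := exists_lt x
        exact ⟨u, q, hu, hx, by rw [h]; exact fun z hz => hz.2⟩
      · obtain ⟨u, hu⟩ := exists_lt x
        obtain ⟨w, hw⟩ := exists_gt x
        exact ⟨u, w, hu, hw, by rw [h]; exact Set.subset_univ _⟩
    have hIoo : ∀ z : M, u < z → z < w → ψ.Realize (Sum.elim g (fun _ : Fin 1 => z)) := by
      intro z h1 h2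
      have hzX : z ∈ X ∩ I := by
        rw [hdecomp]; exact Set.mem_union_right _ (Set.mem_iUnion.2 ⟨i, hsub ⟨h1, h2⟩⟩)
      exact hzX.1
    have hNint : ∀ y : N, ι u < y → y < ι w → y ∈ s := by
      intro y h1 h2
      have := Helper.transfer_interval ι ψ g u w hIoo y h1 h2
      rw [hιg] at this
      exact (hmem_s y).2 this
    obtain ⟨U, hUopen, hxU, hUs⟩ := hsdisc (ι x) hxs
    have hUx : U ∈ nhds (ι x) := hUopen.mem_nhds hxU
    have hux : ι u < ι x := (Helper.map_lt_iff ι u x).2 hu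
    have hxw : ι x < ι w := (Helper.map_lt_iff ι x w).2 hw
    obtain ⟨l, r, hlr, hsubU⟩ := (mem_nhds_iff_exists_Ioo_subset' ⟨ι u, hux⟩ ⟨ι w, hxw⟩).1 hUx
    obtain ⟨z, hz1, hz2⟩ := exists_between (show max l (ι u) < ι x from max_lt hlr.1 hux)
    have hzU : z ∈ U := hsubU ⟨lt_of_le_of_lt (le_max_left _ _) hz1, hz2.trans hlr.2⟩
    have hzs : z ∈ s := hNint z (lt_of_le_of_lt (le_max_right _ _) hz1) (hz2.trans hxw)
    have hzx : z = ι x := by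
      have hmem : z ∈ U ∩ s := ⟨hzU, hzs⟩
      rw [hUs] at hmem
      exact hmem
    exact absurd hzx (ne_of_lt hz2)
  have hXI : X ∩ I = ↑F := by
    rw [hdecomp]
    have h0 : (⋃ i, J i) = ∅ := by simp [hJempty]
    rw [h0, Set.union_empty]
  obtain ⟨c0, hac0, hc0sub⟩ : ∃ c0 : M, a < c0 ∧ Set.Ioo a c0 ⊆ I := by
    rcases hIint with ⟨p, q, h⟩ | ⟨p, h⟩ | ⟨q, h⟩ | h
    · rw [h] at haI
      exact ⟨q, haI.2, by rw [h]; exact fun z hz => ⟨haI.1.trans hz.1, hz.2⟩⟩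
    · rw [h] at haI
      obtain ⟨w, hw⟩ := exists_gt a
      exact ⟨w, hw, by rw [h]; exact fun z hz => haI.trans hz.1⟩
    · rw [h] at haI
      exact ⟨q, haI, by rw [h]; exact fun z hz => hz.2⟩
    · obtain ⟨w, hw⟩ := exists_gt a
      exact ⟨w, hw, by rw [h]; exact Set.subset_univ _⟩
  obtain ⟨c, hac, hcempty⟩ : ∃ c : M, a < c ∧ ∀ x : M, a < x → x < c → x ∉ X := by
    set F' : Finset M := F.filter (fun t => a < t ∧ t < c0) with hF'
    by_cases h : F'.Nonempty
    · refine ⟨min c0 (F'.min' h), lt_min hac0 ?_, ?_⟩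
      · exact ((Finset.mem_filter.1 (F'.min'_mem h)).2).1
      · intro x hax hxc hxX
        have hxc0 : x < c0 := lt_of_lt_of_le hxc (min_le_left _ _)
        have hxF : x ∈ F := by
          have hmem : x ∈ X ∩ I := ⟨hxX, hc0sub ⟨hax, hxc0⟩⟩
          rw [hXI] at hmem
          exact Finset.mem_coe.1 hmem
        have hxF' : x ∈ F' := Finset.mem_filter.2 ⟨hxF, hax, hxc0⟩
        have hle := F'.min'_le x hxF'
        exact not_le.2 (lt_of_lt_of_le hxc (min_le_right _ _)) hle
    · refine ⟨c0, hac0, ?_⟩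
      intro x hax hxc hxX
      have hxF : x ∈ F := by
        have hmem : x ∈ X ∩ I := ⟨hxX, hc0sub ⟨hax, hxc⟩⟩
        rw [hXI] at hmem
        exact Finset.mem_coe.1 hmem
      exact h ⟨x, Finset.mem_filter.2 ⟨hxF, hax, hxc⟩⟩
  have hnot : ∀ z : M, a < z → z < c → (ψ.not).Realize (Sum.elim g (fun _ : Fin 1 => z)) := by
    intro z h1 h2
    rw [Formula.realize_not]
    exact hcempty z h1 h2
  have hb := Helper.transfer_interval ι ψ.not g a c hnot b hab (hinf c hac)
  rw [hιg] at hb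
  rw [Formula.realize_not] at hb
  exact hb ((hmem_s b).1 hbs)
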